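/- Fix ū^L ≥ 0 and real numbers H_L, H_R, H_D, H_U. Define for I ∈ {L,R,D,U}: Λ_I = min{1, ū^L/(ε - Σ_{J : H_J < 0} H_J)} if H_I < 0, and Λ_I = 1 otherwise (ε > 0 fixed). Then for every (θ_L, θ_R, θ_D, θ_U) ∈ [0,Λ_L]×[0,Λ_R]×[0,Λ_D]×[0,Λ_U], one has ū^L + θ_L H_L + θ_R H_R + θ_D H_D + θ_U H_U ≥ 0. Moreover the set S = {θ ∈ [0,1]⁴ : ū^L + Σ_I θ_I H_I ≥ 0} is convex. -/
import Mathlib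


theorem stmt_15 (ubarL ε : ℝ) (hubar : 0 ≤ ubarL) (hε : 0 < ε)
    (H : Fin 4 → ℝ)  -- H 0 = H_L, H 1 = H_R, H 2 = H_D, H 3 = H_U
    (Λ : Fin 4 → ℝ)
    (hΛ : ∀ I, Λ I = if H I < 0 then
        min 1 (ubarL / (ε - ∑ J ∈ Finset.univ.filter (fun J => H J < 0), H J))
      else 1) :
    (∀ θ : Fin 4 → ℝ, (∀ I, θ I ∈ Set.Icc (0:ℝ) (Λ I)) →
        0 ≤ ubarL + ∑ I, θ I * H I) ∧
    Convex ℝ {θ : Fin 4 → ℝ | (∀ I, θ I ∈ Set.Icc (0:ℝ) 1) ∧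
        0 ≤ ubarL + ∑ I, θ I * H I} := by
  constructor
  · intro θ hθ
    set S : Finset (Fin 4) := Finset.univ.filter (fun J => H J < 0) with hS
    have hSneg : ∑ J ∈ S, H J ≤ 0 :=
      Finset.sum_nonpos (fun j hj => le_of_lt (Finset.mem_filter.mp hj).2)
    have hD : 0 < ε - ∑ J ∈ S, H J := by linarith
    set c : ℝ := min 1 (ubarL / (ε - ∑ J ∈ S, H J)) with hc
    have hc0 : 0 ≤ c := le_min zero_le_one (div_nonneg hubar hD.le)
    have hterm : ∀ I, (if H I < 0 then c * H I else 0) ≤ θ I * H I := by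
      intro I
      obtain ⟨h0, h1⟩ := hθ I
      by_cases h : H I < 0
      · simp only [h, if_true]
        have hle : θ I ≤ c := by rw [hΛ I, if_pos h] at h1; exact h1
        exact mul_le_mul_of_nonpos_right hle h.le
      · simp only [h, if_false]
        exact mul_nonneg h0 (not_lt.mp h)
    have hsum : c * ∑ J ∈ S, H J ≤ ∑ I, θ I * H I := by
      calc c * ∑ J ∈ S, H J = ∑ I, (if H I < 0 then c * H I else 0) := by
            rw [Finset.mul_sum, Finset.sum_ite, Finset.sum_const_zero, add_zero]
        _ ≤ ∑ I, θ I * H I := Finset.sum_le_sum (fun i _ => hterm i)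
    have hcle : c ≤ ubarL / (ε - ∑ J ∈ S, H J) := min_le_right _ _
    have h1 : (ubarL / (ε - ∑ J ∈ S, H J)) * ∑ J ∈ S, H J ≤ c * ∑ J ∈ S, H J :=
      mul_le_mul_of_nonpos_right hcle hSneg
    have h2 : -ubarL ≤ (ubarL / (ε - ∑ J ∈ S, H J)) * ∑ J ∈ S, H J := by
      rw [div_mul_eq_mul_div, le_div_iff₀ hD]
      nlinarith
    linarith
  · intro x hx y hy a b ha hb hab
    constructor
    · intro I
      have hxI := hx.1 I
      have hyI := hy.1 I
      simp only [Set.mem_Icc] at hxI hyI ⊢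
      simp only [Pi.add_apply, Pi.smul_apply, smul_eq_mul]
      constructor <;> nlinarith [hxI.1, hxI.2, hyI.1, hyI.2]
    · have hx2 := hx.2
      have hy2 := hy.2
      have : ∑ I, (a • x + b • y) I * H I
          = a * ∑ I, x I * H I + b * ∑ I, y I * H I := by
        rw [Finset.mul_sum, Finset.mul_sum, ← Finset.sum_add_distrib]
        refine Finset.sum_congr rfl (fun i _ => ?_)
        simp [Pi.add_apply, Pi.smul_apply, smul_eq_mul]; ring
      rw [this]
      nlinarith
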